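/- A sequence a = b_0/c_0 > b_1/c_1 > ⋯ > b_n/c_n = a' (fractions in lowest terms) is a shortest 1-path from a to a' if and only if the sequence a/N = b_0/(Nc_0) > ⋯ > b_n/(Nc_n) = a'/N is a shortest N-path from a/N to a'/N. -/

import Mathlib

/-- An `N`-path is a strictly decreasing sequence of rationals (automatically
in lowest terms, as elements of `ℚ`) such that consecutive entries `x > y`
satisfy `x − y = N / (lcm(N, x.den) · lcm(N, y.den))`. -/
def IsNPath (N : ℕ) (l : List ℚ) : Prop :=
  l.Chain' fun x y => y < x ∧
    x - y = (N : ℚ) / ((Nat.lcm N x.den : ℚ) * (Nat.lcm N y.den : ℚ))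

/-- An `N`-path from `a` to `a'`: an `N`-path whose first entry is `a` and
whose last entry is `a'`. -/
def IsNPathFrom (N : ℕ) (a a' : ℚ) (l : List ℚ) : Prop :=
  IsNPath N l ∧ l.head? = some a ∧ l.getLast? = some a'

/-- A shortest `N`-path from `a` to `a'`: an `N`-path from `a` to `a'` such
that no proper subsequence (containing the endpoints) is an `N`-path from `a`
to `a'`. -/
def IsShortestNPath (N : ℕ) (a a' : ℚ) (l : List ℚ) : Prop :=
  IsNPathFrom N a a' l ∧
    ∀ l' : List ℚ, l'.Sublist l → l' ≠ l → ¬ IsNPathFrom N a a' l'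


lemma mul_den_eq (N : ℕ) (q : ℚ) : ((N:ℚ) * q).den = q.den / Nat.gcd N q.den := by
  rw [Rat.mul_den]
  simp only [Rat.den_natCast, Rat.num_natCast, one_mul, Int.natAbs_mul, Int.natAbs_natCast]
  congr 1
  exact Nat.Coprime.gcd_mul_right_cancel N q.reduced

lemma lcm_den_div (N : ℕ) (hN : 0 < N) (q : ℚ) :
    Nat.lcm N (q / N).den = N * q.den := by
  have hq : ((N:ℚ)) ≠ 0 := by positivity
  have hx : (N:ℚ) * (q / N) = q := by field_simp
  set x := q / (N:ℚ) with hxdef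
  have hden : q.den = x.den / Nat.gcd N x.den := by rw [← hx, mul_den_eq]
  have hg : Nat.gcd N x.den ∣ x.den := Nat.gcd_dvd_right _ _
  rw [Nat.lcm, hden, Nat.mul_div_assoc _ hg]

lemma pointwise_iff (N : ℕ) (hN : 0 < N) (x y : ℚ) :
    (y < x ∧ x - y = (1:ℚ) / ((Nat.lcm 1 x.den : ℚ) * (Nat.lcm 1 y.den : ℚ))) ↔
    (y / N < x / N ∧ x / N - y / N =
      (N : ℚ) / ((Nat.lcm N (x / N).den : ℚ) * (Nat.lcm N (y / N).den : ℚ))) := by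
  have hq : (0:ℚ) < (N:ℚ) := by positivity
  have hq' : ((N:ℚ)) ≠ 0 := ne_of_gt hq
  have hx : Nat.lcm N (x / N).den = N * x.den := lcm_den_div N hN x
  have hy : Nat.lcm N (y / N).den = N * y.den := lcm_den_div N hN y
  rw [hx, hy, Nat.lcm_one_left, Nat.lcm_one_left]
  have hxd : ((x.den : ℚ)) ≠ 0 := by positivity
  have hyd : ((y.den : ℚ)) ≠ 0 := by positivity
  constructor
  · rintro ⟨h1, h2⟩
    refine ⟨div_lt_div_of_pos_right h1 hq, ?_⟩
    push_cast
    have e : x / N - y / N = (x - y) / N := by ring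
    rw [e, h2]
    field_simp
  · rintro ⟨h1, h2⟩
    refine ⟨(div_lt_div_iff_of_pos_right hq).mp h1, ?_⟩
    push_cast at h2
    have e : x / (N:ℚ) - y / N = (x - y) / N := by ring
    rw [e] at h2
    have h3 : x - y = (N:ℚ) * ((N:ℚ) / (↑N * ↑x.den * (↑N * ↑y.den))) := by
      rw [← h2]; field_simp
    rw [h3]; field_simp
lemma pathfrom_iff (N : ℕ) (hN : 0 < N) (a a' : ℚ) (t : List ℚ) :
    IsNPathFrom 1 a a' t ↔ IsNPathFrom N (a / N) (a' / N) (t.map (· / (N:ℚ))) := by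
  have hq : ((N:ℚ)) ≠ 0 := by positivity
  have hinj : Function.Injective (· / (N:ℚ)) := fun u v huv => by
    simpa [div_eq_mul_inv, mul_left_inj' (inv_ne_zero hq)] using huv
  unfold IsNPathFrom IsNPath List.Chain'
  rw [List.isChain_map, List.head?_map, List.getLast?_map]
  constructor
  · rintro ⟨hc, hh, hl⟩
    exact ⟨hc.imp fun {x y} hxy => (pointwise_iff N hN x y).mp hxy,
      by rw [hh]; rfl, by rw [hl]; rfl⟩
  · rintro ⟨hc, hh, hl⟩
    refine ⟨hc.imp fun {x y} hxy => (pointwise_iff N hN x y).mpr hxy, ?_, ?_⟩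
    · cases ht : t.head? with
      | none => rw [ht] at hh; simp at hh
      | some v => rw [ht] at hh; simp at hh; exact congrArg some (hinj hh)
    · cases ht : t.getLast? with
      | none => rw [ht] at hl; simp at hl
      | some v => rw [ht] at hl; simp at hl; exact congrArg some (hinj hl)

/-- A sequence `a = b₀/c₀ > b₁/c₁ > ⋯ > bₙ/cₙ = a'`
(fractions in lowest terms) is a shortest `1`-path from `a` to `a'` if and
only if the sequence `a/N = b₀/(Nc₀) > ⋯ > bₙ/(Ncₙ) = a'/N` is a shortest
`N`-path from `a/N` to `a'/N`. -/
theorem stmt11 (N : ℕ) (hN : 0 < N) (a a' : ℚ) (h : a' < a) (h0 : 0 ≤ a')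
    (l : List ℚ) :
    IsShortestNPath 1 a a' l ↔
      IsShortestNPath N (a / N) (a' / N) (l.map (· / (N : ℚ))) := by
  have hq : ((N:ℚ)) ≠ 0 := by positivity
  have hinj : Function.Injective (· / (N:ℚ)) := fun u v huv => by
    simpa [div_eq_mul_inv, mul_left_inj' (inv_ne_zero hq)] using huv
  constructor
  · rintro ⟨h1, h2⟩
    refine ⟨(pathfrom_iff N hN a a' l).mp h1, ?_⟩
    intro l' hsub hne hpath
    obtain ⟨t, htsub, rfl⟩ := List.sublist_map_iff.mp hsub
    exact h2 t htsub (fun he => hne (by rw [he]))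
      ((pathfrom_iff N hN a a' t).mpr hpath)
  · rintro ⟨h1, h2⟩
    refine ⟨(pathfrom_iff N hN a a' l).mpr h1, ?_⟩
    intro t htsub hne hpath
    exact h2 (t.map (· / (N:ℚ))) (htsub.map _)
      (fun he => hne (List.map_injective_iff.mpr hinj he))
      ((pathfrom_iff N hN a a' t).mp hpath)
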